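/- Under the assumptions a>0, 0 < D̄₁ < D̄₂, π - b + a·D̄₁ > 0, and Dₛ < D̄₁ + D̄₂, the profit-only optimal solution (D₁*, D₂*) of the two-consumer aggregator problem always satisfies D₁* < D₂*. -/
import Mathlib

/-- The profit-only optimal solution always satisfies `D₁* < D₂*`, in both the
binding-cap case and the slack case. -/
theorem profit_only_favors_flexible
    (a b π Dbar1 Dbar2 Ds : ℝ) (ha : 0 < a)
    (hDbar1 : 0 < Dbar1) (hDbar12 : Dbar1 < Dbar2)
    (hDs0 : 0 < Ds) (hDs : Ds < Dbar1 + Dbar2)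
    (h1 : π - b + a * Dbar1 > 0)
    -- binding-cap case optimal solution
    (D1b D2b : ℝ)
    (hD1b : D1b = min Dbar1 (max 0 (Ds / 2 + (Dbar1 - Dbar2) / 4)))
    (hD2b : D2b = Ds - D1b)
    -- slack case optimal solution
    (D1n D2n : ℝ)
    (hD1n : D1n = min ((π - b) / (2*a) + Dbar1 / 2) Dbar1)
    (hD2n : D2n = (π - b) / (2*a) + Dbar2 / 2) :
    D1b < D2b ∧ D1n < D2n := by
  constructor
  · have h2 : D1b ≤ max 0 (Ds / 2 + (Dbar1 - Dbar2) / 4) := hD1b ▸ min_le_right _ _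
    have h3 : max 0 (Ds / 2 + (Dbar1 - Dbar2) / 4) < Ds / 2 := by
      apply max_lt <;> linarith
    linarith
  · have h2 : D1n ≤ (π - b) / (2*a) + Dbar1 / 2 := hD1n ▸ min_le_left _ _
    rw [hD2n]; linarith
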